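/- Let w be a word of length n with an Abelian period (h,p) and let d = (n - h) mod p with d ≠ 0. Then for any letter a: (h,p) is an Abelian period of wa if and only if the Parikh vector of w[n-d+1..n]·a is contained componentwise in the Parikh vector of w[n-d-p+1..n-d]. -/
import Mathlib


/-- A word `w` has Abelian period `(h, p)` if `w = u₀u₁⋯u_{k-1}u_k` where `|u₀| = h`,
all the middle blocks `u₁, …, u_{k-1}` have length `p` and the same Parikh vector,
the Parikh vectors of the head `u₀` and the tail `u_k` are contained in that common
Parikh vector, `h < p`, there is at least one middle block, and the tail has length
`< p`. -/
def HasAbelianPeriod {α : Type*} [DecidableEq α] (w : List α) (h p : ℕ) : Prop :=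
  h < p ∧ ∃ (u0 : List α) (us : List (List α)) (uk : List α),
    w = u0 ++ us.flatten ++ uk ∧
    u0.length = h ∧
    us ≠ [] ∧
    (∀ u ∈ us, u.length = p) ∧
    (∀ u ∈ us, ∀ v ∈ us, ∀ a : α, u.count a = v.count a) ∧
    (∀ u ∈ us, ∀ a : α, u0.count a ≤ u.count a) ∧
    (∀ u ∈ us, ∀ a : α, uk.count a ≤ u.count a) ∧
    uk.length < p

private lemma flatten_len {α : Type*} {vs : List (List α)} {p : ℕ}
    (hp : ∀ u ∈ vs, u.length = p) : vs.flatten.length = vs.length * p := by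
  induction vs with
  | nil => simp
  | cons u rest ih =>
    simp only [List.flatten_cons, List.length_append, List.length_cons]
    rw [hp u (by simp), ih (fun v hv => hp v (by simp [hv]))]
    ring

private lemma block_mem {α : Type*} {p : ℕ} :
    ∀ (vs : List (List α)) (v0 vk : List α), (∀ u ∈ vs, u.length = p) →
    ∀ i < vs.length, (((v0 ++ vs.flatten ++ vk).drop (v0.length + i * p)).take p) ∈ vs := by
  intro vs
  induction vs with
  | nil => intro v0 vk _ i hi; simp at hi
  | cons u rest ih =>
    intro v0 vk hp i hi
    have hu : u.length = p := hp u (by simp)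
    cases i with
    | zero =>
      simp only [Nat.zero_mul, Nat.add_zero, List.flatten_cons]
      rw [List.append_assoc, List.drop_left, List.append_assoc, ← hu, List.take_left]
      simp
    | succ i =>
      have key : (((v0 ++ u) ++ rest.flatten ++ vk).drop ((v0 ++ u).length + i * p)).take p
          ∈ rest :=
        ih (v0 ++ u) vk (fun v hv => hp v (by simp [hv])) i (by simpa using hi)
      have e1 : v0 ++ (u :: rest).flatten ++ vk = (v0 ++ u) ++ rest.flatten ++ vk := by
        simp [List.append_assoc]
      have e2 : v0.length + (i + 1) * p = (v0 ++ u).length + i * p := by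
        simp [hu]; ring
      rw [e1, e2]
      exact List.mem_cons_of_mem _ key

private lemma mul_add_inj {p a b s t : ℕ} (h : a * p + s = b * p + t) (hs : s < p)
    (ht : t < p) : a = b ∧ s = t := by
  have hp : 0 < p := lt_of_le_of_lt (Nat.zero_le s) hs
  have hst : s = t := by
    have h1 : (a * p + s) % p = s := by
      rw [Nat.mul_comm, Nat.mul_add_mod]; exact Nat.mod_eq_of_lt hs
    have h2 : (b * p + t) % p = t := by
      rw [Nat.mul_comm, Nat.mul_add_mod]; exact Nat.mod_eq_of_lt ht
    rw [← h1, h, h2]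
  subst hst
  refine ⟨Nat.eq_of_mul_eq_mul_right hp (by omega), rfl⟩

/-- Let `w` be a word of length `n` with an Abelian period `(h, p)` and
let `d = (n - h) % p` with `d ≠ 0`. Then for any letter `a`: `(h, p)` is an Abelian
period of `w·a` iff the Parikh vector of `w[n-d+1..n]·a` is contained componentwise
in the Parikh vector of `w[n-d-p+1..n-d]`. -/
theorem abelian_period_snoc_iff {α : Type*} [DecidableEq α]
    (w : List α) (n h p d : ℕ) (hn : w.length = n)
    (hper : HasAbelianPeriod w h p) (hd : d = (n - h) % p) (hd0 : d ≠ 0) (a : α) :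
    HasAbelianPeriod (w ++ [a]) h p ↔
      ∀ b : α,
        ((w.drop (n - d)) ++ [a]).count b ≤ ((w.drop (n - d - p)).take p).count b := by
  obtain ⟨hhp, u0, us, uk, hw, hu0, hus_ne, hlen, hcnt, hhead, htail, htk⟩ := hper
  set k := us.length with hk
  have hkpos : 1 ≤ k := by
    rcases us with _ | ⟨x, xs⟩
    · exact absurd rfl hus_ne
    · simp [hk]
  have hfl : us.flatten.length = k * p := flatten_len hlen
  have hnlen : n = h + k * p + uk.length := by
    rw [← hn, hw]; simp [hfl, hu0]; ring
  have hdk : d = uk.length := by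
    rw [hd]
    have : n - h = k * p + uk.length := by omega
    rw [this, Nat.mul_comm, Nat.mul_add_mod]
    exact Nat.mod_eq_of_lt htk
  have hdp : d < p := hdk ▸ htk
  have hkp : k * p = (k - 1) * p + p := by
    nth_rewrite 1 [show k = k - 1 + 1 by omega]; ring
  have hnd : n - d = h + k * p := by omega
  have hndp : n - d - p = h + (k - 1) * p := by omega
  have hdropnd : w.drop (n - d) = uk := by
    rw [hw, List.drop_left']
    simp [hu0, hfl, hnd]
  have hB_mem : (w.drop (n - d - p)).take p ∈ us := by
    have := block_mem us u0 uk hlen (k - 1) (by omega)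
    rwa [← hw, hu0, ← hndp] at this
  set B := (w.drop (n - d - p)).take p with hBdef
  have hBlen : B.length = p := hlen B hB_mem
  have hwalen : p ≤ (w.drop (n - d - p)).length := by
    rw [List.length_drop, hn]; omega
  -- the tail blocks of w ++ [a]
  have hdrop_wa : (w ++ [a]).drop (n - d) = uk ++ [a] := by
    rw [List.drop_append_of_le_length (by rw [hn]; omega), hdropnd]
  have hBwa : ((w ++ [a]).drop (n - d - p)).take p = B := by
    rw [List.drop_append_of_le_length (by rw [hn]; omega),
      List.take_append_of_le_length hwalen]
  constructor
  · rintro ⟨-, v0, vs, vk, hwa, hv0, hvs_ne, hvlen, hvcnt, hvhead, hvtail, hvtk⟩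
    intro b
    rw [hdropnd]
    have hvfl : vs.flatten.length = vs.length * p := flatten_len hvlen
    have hlen_eq : vs.length * p + vk.length = k * p + (d + 1) := by
      have : (w ++ [a]).length = n + 1 := by simp [hn]
      rw [hwa] at this
      simp [hvfl, hv0] at this
      omega
    by_cases hcase : d + 1 < p
    · -- vs.length = k, vk.length = d + 1, vk = uk ++ [a]
      obtain ⟨hkk, hvkl⟩ := mul_add_inj hlen_eq hvtk hcase
      have hvk : vk = uk ++ [a] := by
        have : (w ++ [a]).drop (n - d) = vk := by
          rw [hwa, List.drop_left']
          simp [hv0, hvfl, hkk, hnd]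
        rw [← this, hdrop_wa]
      have hB'_mem : B ∈ vs := by
        have := block_mem vs v0 vk hvlen (k - 1) (by omega)
        rwa [← hwa, hv0, ← hndp, hBwa] at this
      rw [← hvk]
      exact hvtail B hB'_mem b
    · -- d + 1 = p; vs.length = k + 1, vk = []
      have hdp1 : d + 1 = p := by omega
      have hlen_eq' : vs.length * p + vk.length = (k + 1) * p + 0 := by
        rw [hlen_eq, hdp1]; ring
      obtain ⟨hkk, hvkl⟩ := mul_add_inj hlen_eq' hvtk (by omega)
      have hB'_mem : B ∈ vs := by
        have := block_mem vs v0 vk hvlen (k - 1) (by omega)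
        rwa [← hwa, hv0, ← hndp, hBwa] at this
      have hukal : (uk ++ [a]).length = p := by simp [← hdk, hdp1]
      have hC_mem : uk ++ [a] ∈ vs := by
        have := block_mem vs v0 vk hvlen k (by omega)
        rwa [← hwa, hv0, ← hnd, hdrop_wa,
          List.take_of_length_le (le_of_eq hukal)] at this
      exact le_of_eq (hvcnt (uk ++ [a]) hC_mem B hB'_mem b)
  · intro hcond
    rw [hdropnd] at hcond
    refine ⟨hhp, ?_⟩
    by_cases hcase : d + 1 < p
    · refine ⟨u0, us, uk ++ [a], by rw [hw]; simp [List.append_assoc], hu0, hus_ne, hlen,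
        hcnt, hhead, ?_, by simp [← hdk]; omega⟩
      intro u hu b
      calc (uk ++ [a]).count b ≤ B.count b := hcond b
        _ = u.count b := hcnt B hB_mem u hu b
    · have hdp1 : d + 1 = p := by omega
      have hukal : (uk ++ [a]).length = p := by simp [← hdk, hdp1]
      have hperm : ∀ b, (uk ++ [a]).count b = B.count b := by
        have hsub : List.Subperm (uk ++ [a]) B := List.subperm_ext_iff.mpr fun x _ => hcond x
        have hper : List.Perm (uk ++ [a]) B :=
          hsub.perm_of_length_le (by rw [hBlen, hukal])
        exact fun b => hper.count_eq b
      refine ⟨u0, us ++ [uk ++ [a]], [], ?_, hu0, by simp, ?_, ?_, ?_, ?_, by simp; omega⟩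
      · rw [hw]; simp [List.append_assoc]
      · intro u hu
        rcases List.mem_append.mp hu with h1 | h1
        · exact hlen u h1
        · simp at h1; rw [h1]; exact hukal
      · intro u hu v hv b
        rcases List.mem_append.mp hu with h1 | h1 <;>
          rcases List.mem_append.mp hv with h2 | h2
        · exact hcnt u h1 v h2 b
        · simp at h2; rw [h2, hperm b]; exact hcnt u h1 B hB_mem b
        · simp at h1; rw [h1, hperm b]; exact (hcnt B hB_mem v h2 b)
        · simp at h1 h2; rw [h1, h2]
      · intro u hu b
        rcases List.mem_append.mp hu with h1 | h1
        · exact hhead u h1 b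
        · simp at h1; rw [h1, hperm b]; exact hhead B hB_mem b
      · intro u hu b; simp
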